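/- Let E be a finite-dimensional vector space over a field k, let v be a prevaluation on E, and let L = {L₁,…,L_r} be a frame adapted to v. Then v is constant on L_i \ {0} for each i, and for every c ∈ ℚ the number of indices i with v(L_i \ {0}) = {c} equals dim F_{v≥c} − dim F_{v>c}, where F_{v≥c} = {e ∈ E : v(e) ≥ c} ∪ {0} and F_{v>c} = {e ∈ E : v(e) > c} ∪ {0}. -/

import Mathlib

/-- A prevaluation on a vector space `E` over a field `k` (value at `0` irrelevant). -/
def IsPrevaluation (k : Type*) [Field k] {E : Type*} [AddCommGroup E] [Module k E]
    (v : E → ℚ) : Prop :=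
  (∀ (c : k) (e : E), c ≠ 0 → e ≠ 0 → v (c • e) = v e) ∧
  (∀ e₁ e₂ : E, e₁ ≠ 0 → e₂ ≠ 0 → e₁ + e₂ ≠ 0 → min (v e₁) (v e₂) ≤ v (e₁ + e₂))

/-- A frame in `E`: a finite collection of one-dimensional subspaces whose
(internal) direct sum is `E`. -/
def IsFrame {k E : Type*} [Field k] [AddCommGroup E] [Module k E]
    {ι : Type*} [Fintype ι] [DecidableEq ι] (L : ι → Submodule k E) : Prop :=
  (∀ i, Module.finrank k (L i) = 1) ∧ DirectSum.IsInternal L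

/-- A frame `L` is adapted to `v` if every subspace `F_{v ≥ a}` is the sum of
some subset of the members of `L`. -/
def AdaptedFrame {k E : Type*} [Field k] [AddCommGroup E] [Module k E]
    {ι : Type*} (v : E → ℚ) (L : ι → Submodule k E) : Prop :=
  ∀ a : ℚ, ∃ s : Finset ι, {e : E | e = 0 ∨ a ≤ v e} = ↑(∑ i ∈ s, L i)

/-- Auxiliary: a finite sum of submodules is below `F` iff each member is. -/
theorem aux_sum_le {k E : Type*} [Field k] [AddCommGroup E] [Module k E]
    {ι : Type*} (t : Finset ι) (L : ι → Submodule k E) (F : Submodule k E)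
    (h : ∀ i ∈ t, L i ≤ F) : ∑ i ∈ t, L i ≤ F := by
  classical
  induction t using Finset.induction_on with
  | empty => simp
  | insert _ _ hj ih =>
    rw [Finset.sum_insert hj, Submodule.add_eq_sup]
    exact sup_le (h _ (Finset.mem_insert_self _ _))
      (ih fun i hi => h i (Finset.mem_insert_of_mem hi))

/-- Auxiliary: the dimension of a sum of independent lines is the number of lines. -/
theorem aux_finrank_sum {k E : Type*} [Field k] [AddCommGroup E] [Module k E]
    [FiniteDimensional k E] {ι : Type*} [DecidableEq ι] (L : ι → Submodule k E)
    (hind : iSupIndep L) (h1 : ∀ i, Module.finrank k (L i) = 1) (t : Finset ι) :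
    Module.finrank k (∑ i ∈ t, L i : Submodule k E) = t.card := by
  classical
  induction t using Finset.induction_on with
  | empty => simp; exact finrank_bot k E
  | @insert j t hj ih =>
    rw [Finset.sum_insert hj, Submodule.add_eq_sup]
    have hS : (∑ i ∈ t, L i : Submodule k E) ≤ ⨆ (i) (_ : i ≠ j), L i := by
      refine aux_sum_le t L _ fun i hi => ?_
      exact le_iSup₂ (f := fun (i : ι) (_ : i ≠ j) => L i) i
        (fun h => hj (h ▸ hi))
    have hdisj : Disjoint (L j) (∑ i ∈ t, L i : Submodule k E) :=
      (hind j).mono_right hS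
    have := Submodule.finrank_sup_add_finrank_inf_eq (L j) (∑ i ∈ t, L i)
    rw [hdisj.eq_bot, finrank_bot, add_zero, h1 j, ih] at this
    rw [this, Finset.card_insert_of_notMem hj, add_comm]

/-- If the frame `L` is adapted to the prevaluation `v`, then `v` is constant on
each `Lᵢ \ {0}`, and for each `c ∈ ℚ` the number of indices `i` with
`v(Lᵢ \ {0}) = {c}` equals `dim F_{v ≥ c} - dim F_{v > c}`. -/
theorem stmt9 {k E : Type*} [Field k] [AddCommGroup E] [Module k E] [FiniteDimensional k E]
    {r : ℕ} (v : E → ℚ) (hv : IsPrevaluation k v)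
    (L : Fin r → Submodule k E) (hL : IsFrame L) (hvL : AdaptedFrame v L) :
    (∀ i, ∀ e ∈ L i, ∀ e' ∈ L i, e ≠ 0 → e' ≠ 0 → v e = v e') ∧
    (∀ (c : ℚ) (Fge Fgt : Submodule k E),
        (Fge : Set E) = {e : E | e = 0 ∨ c ≤ v e} →
        (Fgt : Set E) = {e : E | e = 0 ∨ c < v e} →
        {i : Fin r | ∀ e ∈ L i, e ≠ 0 → v e = c}.ncard
          = Module.finrank k Fge - Module.finrank k Fgt) := by
  classical
  obtain ⟨hrk, hint⟩ := hL
  have hind : iSupIndep L := hint.submodule_iSupIndep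
  -- a generator for each line
  have hgen : ∀ i, ∃ g : E, g ∈ L i ∧ g ≠ 0 ∧ ∀ e ∈ L i, ∃ c : k, c • g = e := by
    intro i
    obtain ⟨g, hg0, hg⟩ := finrank_eq_one_iff'.mp (hrk i)
    refine ⟨(g : E), g.2, by simpa using hg0, fun e he => ?_⟩
    obtain ⟨c, hc⟩ := hg ⟨e, he⟩
    exact ⟨c, congrArg Subtype.val hc⟩
  choose g hgmem hg0 hgspan using hgen
  -- v is constant on each line
  have hconst : ∀ i, ∀ e ∈ L i, e ≠ 0 → v e = v (g i) := by
    intro i e he hne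
    obtain ⟨c, hc⟩ := hgspan i e he
    have hc0 : c ≠ 0 := by rintro rfl; simp at hc; exact hne hc.symm
    rw [← hc, hv.1 c (g i) hc0 (hg0 i)]
  refine ⟨fun i e he e' he' hne hne' => by rw [hconst i e he hne, hconst i e' he' hne'], ?_⟩
  intro c Fge Fgt hge hgt
  set w : Fin r → ℚ := fun i => v (g i) with hw
  have hFge : Fge = ∑ i ∈ Finset.univ.filter (fun i => c ≤ w i), L i := by
    apply le_antisymm
    · intro e he
      have he' : e = 0 ∨ c ≤ v e := by
        have : e ∈ (Fge : Set E) := he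
        rwa [hge] at this
      rcases he' with rfl | hce
      · exact Submodule.zero_mem _
      obtain ⟨s, hs⟩ := hvL (v e)
      have hes : e ∈ (∑ i ∈ s, L i : Submodule k E) := by
        have : e ∈ {e' : E | e' = 0 ∨ v e ≤ v e'} := Or.inr le_rfl
        rwa [hs] at this
      have hsub : s ⊆ Finset.univ.filter (fun i => c ≤ w i) := by
        intro i hi
        have hLi : L i ≤ ∑ j ∈ s, L j :=
          Finset.single_le_sum (f := L) (fun _ _ => zero_le) hi
        have : (g i) ∈ {e' : E | e' = 0 ∨ v e ≤ v e'} := by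
          rw [hs]; exact hLi (hgmem i)
        rcases this with h0 | hle
        · exact absurd h0 (hg0 i)
        · simp only [Finset.mem_filter, Finset.mem_univ, true_and]
          exact le_trans hce hle
      exact Finset.sum_le_sum_of_subset (f := L) hsub hes
    · refine aux_sum_le _ L Fge fun i hi => fun e he => ?_
      simp only [Finset.mem_filter, Finset.mem_univ, true_and] at hi
      show e ∈ (Fge : Set E)
      rw [hge]
      by_cases h0 : e = 0
      · exact Or.inl h0
      · exact Or.inr (le_trans hi (le_of_eq (hconst i e he h0).symm))
  have hFgt : Fgt = ∑ i ∈ Finset.univ.filter (fun i => c < w i), L i := by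
    apply le_antisymm
    · intro e he
      have he' : e = 0 ∨ c < v e := by
        have : e ∈ (Fgt : Set E) := he
        rwa [hgt] at this
      rcases he' with rfl | hce
      · exact Submodule.zero_mem _
      obtain ⟨s, hs⟩ := hvL (v e)
      have hes : e ∈ (∑ i ∈ s, L i : Submodule k E) := by
        have : e ∈ {e' : E | e' = 0 ∨ v e ≤ v e'} := Or.inr le_rfl
        rwa [hs] at this
      have hsub : s ⊆ Finset.univ.filter (fun i => c < w i) := by
        intro i hi
        have hLi : L i ≤ ∑ j ∈ s, L j :=
          Finset.single_le_sum (f := L) (fun _ _ => zero_le) hi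
        have : (g i) ∈ {e' : E | e' = 0 ∨ v e ≤ v e'} := by
          rw [hs]; exact hLi (hgmem i)
        rcases this with h0 | hle
        · exact absurd h0 (hg0 i)
        · simp only [Finset.mem_filter, Finset.mem_univ, true_and]
          exact lt_of_lt_of_le hce hle
      exact Finset.sum_le_sum_of_subset (f := L) hsub hes
    · refine aux_sum_le _ L Fgt fun i hi => fun e he => ?_
      simp only [Finset.mem_filter, Finset.mem_univ, true_and] at hi
      show e ∈ (Fgt : Set E)
      rw [hgt]
      by_cases h0 : e = 0
      · exact Or.inl h0
      · exact Or.inr (lt_of_lt_of_le hi (le_of_eq (hconst i e he h0).symm))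
  have hdge : Module.finrank k Fge = (Finset.univ.filter (fun i => c ≤ w i)).card := by
    rw [hFge]; exact aux_finrank_sum L hind hrk _
  have hdgt : Module.finrank k Fgt = (Finset.univ.filter (fun i => c < w i)).card := by
    rw [hFgt]; exact aux_finrank_sum L hind hrk _
  have hset : {i : Fin r | ∀ e ∈ L i, e ≠ 0 → v e = c}
      = ↑(Finset.univ.filter (fun i => w i = c)) := by
    ext i
    simp only [Set.mem_setOf_eq, Finset.coe_filter, Finset.mem_univ, true_and]
    constructor
    · intro h; exact h (g i) (hgmem i) (hg0 i)
    · intro h e he hne; rw [hconst i e he hne]; exact h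
  rw [hset, Set.ncard_coe_finset, hdge, hdgt]
  have hsub : Finset.univ.filter (fun i => c < w i) ⊆ Finset.univ.filter (fun i => c ≤ w i) := by
    intro i hi
    simp only [Finset.mem_filter, Finset.mem_univ, true_and] at hi ⊢
    exact le_of_lt hi
  rw [← Finset.card_sdiff_of_subset hsub]
  congr 1
  ext i
  simp only [Finset.mem_sdiff, Finset.mem_filter, Finset.mem_univ, true_and]
  constructor
  · intro h; exact ⟨le_of_eq h.symm, fun hlt => absurd h (ne_of_gt hlt)⟩
  · intro ⟨h1, h2⟩; exact le_antisymm (not_lt.mp h2) h1
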